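/- The number of parking functions of length n is (n+1)^(n-1). -/

import Mathlib

set_option linter.unnecessarySimpa false

open Finset

namespace ParkingProof

variable {n : ℕ}

/-- number of letters of `w` equal to `c` -/
def N (w : Fin n → ZMod (n + 1)) (c : ZMod (n + 1)) : ℕ :=
  (univ.filter fun i => w i = c).card

/-- partial sums minus `t` -/
def g (w : Fin n → ZMod (n + 1)) (t : ℕ) : ℤ :=
  (∑ j ∈ range t, (N w (j : ZMod (n + 1)) : ℤ)) - t

lemma sum_N (w : Fin n → ZMod (n + 1)) : ∑ c : ZMod (n + 1), N w c = n := by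
  have := (Finset.card_eq_sum_card_fiberwise
    (f := w) (s := univ) (t := univ) (fun x _ => mem_univ _)).symm
  simpa [N] using this

lemma sum_range_N (w : Fin n → ZMod (n + 1)) (t : ℕ) :
    ∑ j ∈ range (n + 1), N w ((t + j : ℕ) : ZMod (n + 1)) = n := by
  have hbij : Function.Bijective (fun i : Fin (n + 1) => ((i : ℕ) : ZMod (n + 1))) := by
    constructor
    · intro i j hij
      have h := congrArg ZMod.val hij
      rw [ZMod.val_cast_of_lt i.isLt, ZMod.val_cast_of_lt j.isLt] at h
      exact Fin.ext h
    · intro x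
      exact ⟨⟨x.val, x.val_lt⟩, by simp [ZMod.natCast_rightInverse x]⟩
  have h1 : ∑ j ∈ range (n + 1), N w ((t + j : ℕ) : ZMod (n + 1))
      = ∑ x : ZMod (n + 1), N w ((t : ZMod (n+1)) + x) := by
    rw [← Fin.sum_univ_eq_sum_range]
    refine Fintype.sum_bijective _ hbij _ _ (fun i => ?_)
    push_cast
    ring_nf
  rw [h1]
  exact (Fintype.sum_equiv (Equiv.addLeft ((t : ZMod (n+1)))) _ (N w)
    (fun x => rfl)).trans (sum_N w)

lemma g_step (w : Fin n → ZMod (n + 1)) (t : ℕ) :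
    g w (t + (n + 1)) = g w t - 1 := by
  have h := Finset.sum_range_add_sum_Ico (fun j => (N w (j : ZMod (n + 1)) : ℤ))
    (Nat.le_add_right t (n + 1))
  have h2 : ∑ j ∈ Ico t (t + (n + 1)), (N w (j : ZMod (n + 1)) : ℤ) = n := by
    rw [Finset.sum_Ico_eq_sum_range]
    have : t + (n + 1) - t = n + 1 := by omega
    rw [this]
    have := sum_range_N w t
    exact_mod_cast congrArg (fun x : ℕ => (x : ℤ)) this
  simp only [g]
  rw [← h, h2]
  push_cast
  ring

/-- the count of letters of the shifted word with value ≤ k, in terms of `g`. -/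
lemma card_shift (w : Fin n → ZMod (n + 1)) (u k : ℕ) (hk : k < n + 1) :
    ((univ.filter fun i => (w i + -(u : ZMod (n + 1))).val ≤ k).card : ℤ)
      = g w (u + (k + 1)) - g w u + (k + 1) := by
  have hcard : (univ.filter fun i => (w i + -(u : ZMod (n + 1))).val ≤ k).card
      = ∑ j ∈ range (k + 1), N w ((u + j : ℕ) : ZMod (n + 1)) := by
    rw [Finset.card_eq_sum_card_fiberwise
      (f := fun i => (w i + -(u : ZMod (n + 1))).val)
      (t := range (k + 1)) (fun x hx => by
        simp only [mem_coe, mem_filter, mem_univ, true_and] at hx ⊢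
        simpa [Nat.lt_succ_iff] using hx)]
    refine Finset.sum_congr rfl (fun j hj => ?_)
    have hjk : j ≤ k := by simpa [Nat.lt_succ_iff] using hj
    have hjlt : j < n + 1 := lt_of_le_of_lt hjk hk
    congr 1
    ext i
    simp only [mem_filter, mem_univ, true_and, N]
    constructor
    · rintro ⟨-, h2⟩
      have : w i + -(u : ZMod (n + 1)) = (j : ZMod (n + 1)) := by
        have := ZMod.natCast_rightInverse (n := n + 1) (w i + -(u : ZMod (n + 1)))
        rw [← this, h2]
      have : w i = (j : ZMod (n + 1)) + (u : ZMod (n + 1)) := by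
        rw [← this]; ring
      rw [this]; push_cast; ring
    · intro h
      have hval : w i + -(u : ZMod (n + 1)) = (j : ZMod (n + 1)) := by
        rw [h]; push_cast; ring
      rw [hval, ZMod.val_cast_of_lt hjlt]
      exact ⟨hjk, rfl⟩
  rw [hcard]
  have h1 : ∑ j ∈ range (k + 1), N w ((u + j : ℕ) : ZMod (n + 1))
      = ∑ j ∈ Ico u (u + (k + 1)), N w ((j : ℕ) : ZMod (n + 1)) := by
    rw [Finset.sum_Ico_eq_sum_range]
    have : u + (k + 1) - u = k + 1 := by omega
    rw [this]
  have h2 := Finset.sum_range_add_sum_Ico (fun j => (N w (j : ZMod (n + 1)) : ℤ))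
    (Nat.le_add_right u (k + 1))
  have h3 : ∑ j ∈ Ico u (u + (k + 1)), (N w (j : ZMod (n + 1)) : ℤ)
      = g w (u + (k + 1)) - g w u + (u + (k+1)) - u := by
    simp only [g]
    rw [← h2]
    push_cast
    ring
  rw [h1]
  rw [show ((∑ j ∈ Ico u (u + (k + 1)), N w ((j : ℕ) : ZMod (n + 1)) : ℕ) : ℤ)
      = ∑ j ∈ Ico u (u + (k + 1)), (N w (j : ZMod (n + 1)) : ℤ) by push_cast; ring]
  rw [h3]
  ring

/-- the parking condition for the shift by `-u` is equivalent to `u` being a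
"cyclic minimum" of `g`. -/
lemma parking_iff (w : Fin n → ZMod (n + 1)) (u : ℕ) :
    (∀ k : Fin n, (k : ℕ) + 1 ≤
        (univ.filter fun i => (w i + -(u : ZMod (n + 1))).val ≤ (k : ℕ)).card)
    ↔ (∀ s, u < s → s < u + (n + 1) → g w u ≤ g w s) := by
  constructor
  · intro h s hs1 hs2
    set k : ℕ := s - u - 1 with hk
    have hkn : k < n := by omega
    have := h ⟨k, hkn⟩
    have hc := card_shift w u k (by omega)
    simp only at this
    have : ((k : ℤ) + 1) ≤ ((univ.filter fun i =>
        (w i + -(u : ZMod (n + 1))).val ≤ k).card : ℤ) := by exact_mod_cast this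
    rw [hc] at this
    have hsu : u + (k + 1) = s := by omega
    rw [hsu] at this
    linarith
  · intro h k
    have hc := card_shift w u (k : ℕ) (by omega)
    have hg := h (u + ((k : ℕ) + 1)) (by omega) (by omega)
    have : ((k : ℕ) + 1 : ℤ) ≤ ((univ.filter fun i =>
        (w i + -(u : ZMod (n + 1))).val ≤ (k : ℕ)).card : ℤ) := by
      rw [hc]; linarith
    exact_mod_cast this

lemma exists_unique_u (w : Fin n → ZMod (n + 1)) :
    ∃! u : ℕ, u ∈ Finset.Icc 1 (n + 1) ∧
      ∀ s, u < s → s < u + (n + 1) → g w u ≤ g w s := by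
  classical
  set M : Finset ℕ := (Finset.Icc 1 (n + 1)).filter
    (fun t => ∀ s ∈ Finset.Icc 1 (n + 1), g w t ≤ g w s) with hM
  have hMne : M.Nonempty := by
    obtain ⟨t, ht, hmin⟩ := Finset.exists_min_image (Finset.Icc 1 (n + 1)) (g w)
      ⟨1, by simp⟩
    exact ⟨t, by simp only [hM, mem_filter]; exact ⟨ht, hmin⟩⟩
  set u := M.min' hMne with hu
  have huM : u ∈ M := Finset.min'_mem _ _
  simp only [hM, mem_filter] at huM
  obtain ⟨huIcc, humin⟩ := huM
  have huIcc' := Finset.mem_Icc.1 huIcc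
  have hstrict : ∀ s ∈ Finset.Icc 1 (n + 1), s < u → g w u < g w s := by
    intro s hs hsu
    rcases lt_or_ge (g w u) (g w s) with h | h
    · exact h
    · exfalso
      have hsM : s ∈ M := by
        simp only [hM, mem_filter]
        exact ⟨hs, fun t ht => le_trans h (humin t ht)⟩
      have := Finset.min'_le M s hsM
      omega
  have hCu : ∀ s, u < s → s < u + (n + 1) → g w u ≤ g w s := by
    intro s hs1 hs2
    rcases le_or_gt s (n + 1) with h | h
    · exact humin s (Finset.mem_Icc.2 ⟨by omega, h⟩)
    · have hs' : s - (n + 1) ∈ Finset.Icc 1 (n + 1) := by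
        simp only [Finset.mem_Icc]; omega
      have hlt : s - (n + 1) < u := by omega
      have := hstrict _ hs' hlt
      have hgs : g w s = g w (s - (n + 1)) - 1 := by
        have := g_step w (s - (n + 1))
        rw [show s - (n + 1) + (n + 1) = s by omega] at this
        rw [this]
      rw [hgs]
      omega
  refine ⟨u, ⟨huIcc, hCu⟩, ?_⟩
  rintro v ⟨hvIcc, hCv⟩
  have hvIcc' := Finset.mem_Icc.1 hvIcc
  by_contra hne
  -- WLOG style: handle both orders
  rcases lt_or_gt_of_ne hne with hlt | hlt
  · -- v < u
    have h1 : g w v ≤ g w u := hCv u hlt (by omega)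
    have h2 : g w u ≤ g w (v + (n + 1)) := hCu (v + (n + 1)) (by omega) (by omega)
    rw [g_step w v] at h2
    omega
  · -- u < v
    have h1 : g w u ≤ g w v := hCu v hlt (by omega)
    have h2 : g w v ≤ g w (u + (n + 1)) := hCv (u + (n + 1)) (by omega) (by omega)
    rw [g_step w u] at h2
    omega

/-- Pollak's cycle lemma: each word has a unique shift that is "parking". -/
lemma exists_unique_shift (w : Fin n → ZMod (n + 1)) :
    ∃! c : ZMod (n + 1), ∀ k : Fin n,
      (k : ℕ) + 1 ≤ (univ.filter fun i => (w i + c).val ≤ (k : ℕ)).card := by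
  obtain ⟨u, ⟨huIcc, hCu⟩, huniq⟩ := exists_unique_u w
  have huIcc' := Finset.mem_Icc.1 huIcc
  refine ⟨-(u : ZMod (n + 1)), (parking_iff w u).2 hCu, ?_⟩
  intro c hc
  set u' : ℕ := (n + 1) - c.val with hu'
  have hcval : c.val < n + 1 := c.val_lt
  have hcu' : c = -((u' : ℕ) : ZMod (n + 1)) := by
    have h1 : ((u' : ℕ) : ZMod (n + 1)) = ((n + 1 : ℕ) : ZMod (n + 1)) - (c.val : ZMod (n + 1)) := by
      rw [hu', Nat.cast_sub (le_of_lt hcval)]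
    rw [h1, ZMod.natCast_self, ZMod.natCast_rightInverse c]
    ring
  have hparku' : ∀ k : Fin n, (k : ℕ) + 1 ≤
      (univ.filter fun i => (w i + -((u' : ℕ) : ZMod (n + 1))).val ≤ (k : ℕ)).card := by
    intro k
    have := hc k
    rw [hcu'] at this
    exact this
  have hu'eq : u' = u := by
    refine huniq u' ⟨?_, (parking_iff w u').1 hparku'⟩
    simp only [Finset.mem_Icc]; omega
  rw [hcu', hu'eq]

lemma val_lt_of_parking (hn : 0 < n) (q : Fin n → ZMod (n + 1))
    (hq : ∀ k : Fin n, (k : ℕ) + 1 ≤ (univ.filter fun i => (q i).val ≤ (k : ℕ)).card)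
    (i : Fin n) : (q i).val < n := by
  have hk := hq ⟨n - 1, by omega⟩
  simp only at hk
  have hcard : (univ.filter fun i => (q i).val ≤ n - 1).card ≤ n := by
    calc _ ≤ (univ : Finset (Fin n)).card := Finset.card_filter_le _ _
    _ = n := by simp
  have : (univ.filter fun i => (q i).val ≤ n - 1).card = n := by omega
  have huniv : (univ.filter fun i => (q i).val ≤ n - 1) = univ := by
    apply Finset.eq_univ_of_card
    simpa using this
  have hi : i ∈ univ.filter fun i => (q i).val ≤ n - 1 := by
    rw [huniv]; exact mem_univ i
  simp only [mem_filter] at hi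
  omega

end ParkingProof

open ParkingProof in
/-- The number of parking functions of length `n` is `(n+1)^(n-1)`.
A word `a` over `{1,…,n}` (0-indexed, with values in `Fin n`) is a parking
function iff for every `k`, at least `k` of its letters are `≤ k` (1-indexed). -/
theorem parking_function_card (n : ℕ) :
    Nat.card {a : Fin n → Fin n //
      ∀ k : Fin n, (k : ℕ) + 1 ≤ (Finset.univ.filter (fun i => a i ≤ k)).card} =
    (n + 1) ^ (n - 1) := by
  classical
  set P : (Fin n → Fin n) → Prop := fun a =>
    ∀ k : Fin n, (k : ℕ) + 1 ≤ (Finset.univ.filter (fun i => a i ≤ k)).card with hP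
  have hset : ∀ (a : Fin n → Fin n) (k : Fin n),
      (univ.filter fun i => a i ≤ k)
        = (univ.filter fun i => (((a i : ℕ) : ZMod (n + 1))).val ≤ (k : ℕ)) := by
    intro a k
    apply Finset.filter_congr
    intro i _
    rw [ZMod.val_cast_of_lt (show ((a i : ℕ)) < n + 1 by omega)]
    exact Fin.le_def
  have key : Nat.card ({a : Fin n → Fin n // P a} × ZMod (n + 1))
      = Nat.card (Fin n → ZMod (n + 1)) := by
    refine Nat.card_congr (Equiv.ofBijective
      (fun p => fun i => ((p.1.1 i : ℕ) : ZMod (n + 1)) + p.2) ⟨?_, ?_⟩)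
    · rintro ⟨⟨a, ha⟩, c⟩ ⟨⟨a', ha'⟩, c'⟩ hpq
      simp only [funext_iff] at hpq
      set w : Fin n → ZMod (n + 1) := fun i => ((a i : ℕ) : ZMod (n + 1)) + c with hw
      have h1 : ∀ k : Fin n, (k : ℕ) + 1 ≤
          (univ.filter fun i => (w i + -c).val ≤ (k : ℕ)).card := by
        intro k
        have h0 := ha k
        rw [hset a k] at h0
        simpa only [hw, add_neg_cancel_right] using h0
      have h2 : ∀ k : Fin n, (k : ℕ) + 1 ≤
          (univ.filter fun i => (w i + -c').val ≤ (k : ℕ)).card := by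
        intro k
        have h0 := ha' k
        rw [hset a' k] at h0
        simpa only [hw, hpq, add_neg_cancel_right] using h0
      have hcc : -c = -c' := (exists_unique_shift w).unique h1 h2
      have hcc' : c = c' := neg_injective hcc
      have haa : a = a' := by
        funext i
        have := hpq i
        rw [hcc'] at this
        have h3 : ((a i : ℕ) : ZMod (n + 1)) = ((a' i : ℕ) : ZMod (n + 1)) := by
          exact add_right_cancel this
        have h4 := congrArg ZMod.val h3
        rw [ZMod.val_cast_of_lt (show ((a i : ℕ)) < n + 1 by omega),
          ZMod.val_cast_of_lt (show ((a' i : ℕ)) < n + 1 by omega)] at h4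
        exact Fin.ext h4
      subst haa; subst hcc'
      rfl
    · intro w
      rcases Nat.eq_zero_or_pos n with hn | hn
      · subst hn
        refine ⟨⟨⟨fun i => i.elim0, fun k => k.elim0⟩, 0⟩, ?_⟩
        funext i
        exact i.elim0
      · obtain ⟨c, hc, -⟩ := exists_unique_shift w
        have hlt : ∀ i, (w i + c).val < n := val_lt_of_parking hn _ hc
        have hvala : ∀ i, ((((w i + c).val : ℕ) : ZMod (n + 1))) = w i + c := fun i =>
          ZMod.natCast_rightInverse _
        refine ⟨⟨⟨fun i => ⟨(w i + c).val, hlt i⟩, ?_⟩, -c⟩, ?_⟩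
        · intro k
          rw [hset _ k]
          have h0 := hc k
          simp only [hvala]
          exact h0
        · funext i
          simp only [hvala, add_neg_cancel_right]
  have hr : Nat.card (Fin n → ZMod (n + 1)) = (n + 1) ^ n := by
    rw [Nat.card_eq_fintype_card, Fintype.card_fun, ZMod.card, Fintype.card_fin]
  rw [Nat.card_prod, Nat.card_zmod, hr] at key
  rcases n with _ | m
  · simpa using key
  · have := Nat.eq_of_mul_eq_mul_right (show 0 < m + 1 + 1 by omega)
      (key.trans (by rw [pow_succ]))
    simpa using this
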